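/- Let δ > 0 and let ω : (0,δ) → ℝ be measurable with weighted volume m := ∫_{B_δ(0)⊂ℝ²} ω(‖ξ‖) ‖ξ‖² dξ ≠ 0. Given real constants C₁₁₁₁, C₁₁₂₂, C₁₁₁₂, C₂₂₁₂, C₂₂₂₂, define Λ₁₁₁₁ = 10C₁₁₁₁ − 20C₁₁₂₂ + 2C₂₂₂₂, Λ₁₁₁₂ = 20C₁₁₁₂ − 12C₂₂₁₂, Λ₁₁₂₂ = (−10C₁₁₁₁ + 76C₁₁₂₂ − 10C₂₂₂₂)/3, Λ₂₂₁₂ = −12C₁₁₁₂ + 20C₂₂₁₂, Λ₂₂₂₂ = 2C₁₁₁₁ − 20C₁₁₂₂ + 10C₂₂₂₂, and define λ(ξ) := (1/m)(Λ₁₁₁₁ ξ₁⁴ + 4Λ₁₁₁₂ ξ₁³ξ₂ + 6Λ₁₁₂₂ ξ₁²ξ₂² + 4Λ₂₂₁₂ ξ₁ξ₂³ + Λ₂₂₂₂ ξ₂⁴) ω(‖ξ‖)/‖ξ‖⁶ for ξ ≠ 0. Then: (i) λ(−ξ) = λ(ξ) for all ξ; (ii) if C₁₁₁₂ = C₂₂₁₂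 = 0, then λ(Ref(0)ξ) = λ(ξ) for all ξ (rectangular symmetry); (iii) if moreover C₁₁₁₁ = C₂₂₂₂, then also λ(Ref(π/4)ξ) = λ(ξ) for all ξ (square symmetry); (iv) if moreover C₁₁₂₂ = C₁₁₁₁/3, then λ(ξ) = (Λ₁₁₁₁/m) ω(‖ξ‖)/‖ξ‖² with Λ₁₁₁₁ = (16/3)C₁₁₁₁, and λ(Qξ) = λ(ξ) for every orthogonal 2×2 matrix Q (isotropic symmetry). -/

import Mathlib

open MeasureTheory Real Matrix

/-- Reflection about the line through the origin making angle `θ` with the x-axis. -/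
noncomputable def Ref (θ : ℝ) : Matrix (Fin 2) (Fin 2) ℝ :=
  !![Real.cos (2*θ), Real.sin (2*θ); Real.sin (2*θ), -Real.cos (2*θ)]

lemma nsq_two (ξ : EuclideanSpace ℝ (Fin 2)) : ‖ξ‖^2 = (ξ 0)^2 + (ξ 1)^2 := by
  rw [EuclideanSpace.norm_eq, Real.sq_sqrt (by positivity)]
  simp [Fin.sum_univ_two, sq_abs]

/-- the two-dimensional anisotropic bond-based micromodulus
function inherits the symmetries of the elasticity tensor that informs it. -/
theorem statement13 (δ : ℝ) (hδ : 0 < δ)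
    (ω : ℝ → ℝ) (hω : Measurable ω)
    (m : ℝ)
    (hm : m = ∫ ξ in Metric.ball (0 : EuclideanSpace ℝ (Fin 2)) δ, ω ‖ξ‖ * ‖ξ‖^2)
    (hmne : m ≠ 0)
    (C1111 C1122 C1112 C2212 C2222 : ℝ)
    (Λ1111 Λ1112 Λ1122 Λ2212 Λ2222 : ℝ)
    (hΛ1111 : Λ1111 = 10*C1111 - 20*C1122 + 2*C2222)
    (hΛ1112 : Λ1112 = 20*C1112 - 12*C2212)
    (hΛ1122 : Λ1122 = (-10*C1111 + 76*C1122 - 10*C2222)/3)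
    (hΛ2212 : Λ2212 = -12*C1112 + 20*C2212)
    (hΛ2222 : Λ2222 = 2*C1111 - 20*C1122 + 10*C2222)
    (lam : EuclideanSpace ℝ (Fin 2) → ℝ)
    (hlam : ∀ ξ : EuclideanSpace ℝ (Fin 2), ξ ≠ 0 →
      lam ξ = (1/m) *
        (Λ1111 * (ξ 0)^4 + 4*Λ1112 * (ξ 0)^3 * (ξ 1) + 6*Λ1122 * (ξ 0)^2 * (ξ 1)^2
          + 4*Λ2212 * (ξ 0) * (ξ 1)^3 + Λ2222 * (ξ 1)^4) * (ω ‖ξ‖ / ‖ξ‖^6)) :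
    -- (i) evenness (oblique symmetry)
    (∀ ξ : EuclideanSpace ℝ (Fin 2), lam (-ξ) = lam ξ) ∧
    -- (ii) rectangular symmetry
    (C1112 = 0 → C2212 = 0 →
      ∀ ξ : EuclideanSpace ℝ (Fin 2), lam (WithLp.toLp 2 ((Ref 0).mulVec ξ)) = lam ξ) ∧
    -- (iii) square symmetry
    (C1112 = 0 → C2212 = 0 → C1111 = C2222 →
      ∀ ξ : EuclideanSpace ℝ (Fin 2), lam (WithLp.toLp 2 ((Ref (π/4)).mulVec ξ)) = lam ξ) ∧
    -- (iv) isotropic symmetry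
    (C1112 = 0 → C2212 = 0 → C1111 = C2222 → C1122 = C1111/3 →
      Λ1111 = (16/3) * C1111 ∧
      (∀ ξ : EuclideanSpace ℝ (Fin 2), ξ ≠ 0 →
        lam ξ = (Λ1111/m) * (ω ‖ξ‖ / ‖ξ‖^2)) ∧
      (∀ Q : Matrix (Fin 2) (Fin 2) ℝ, Q ∈ Matrix.orthogonalGroup (Fin 2) ℝ →
        ∀ ξ : EuclideanSpace ℝ (Fin 2), lam (WithLp.toLp 2 (Q.mulVec ξ)) = lam ξ)) := by
  have main : ∀ A : Matrix (Fin 2) (Fin 2) ℝ,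
      (∀ v : EuclideanSpace ℝ (Fin 2),
        ((WithLp.toLp 2 (A.mulVec v) : EuclideanSpace ℝ (Fin 2)) 0)^2 +
        ((WithLp.toLp 2 (A.mulVec v) : EuclideanSpace ℝ (Fin 2)) 1)^2 = (v 0)^2 + (v 1)^2) →
      (∀ v : EuclideanSpace ℝ (Fin 2),
        (Λ1111 * ((WithLp.toLp 2 (A.mulVec v) : EuclideanSpace ℝ (Fin 2)) 0)^4
          + 4*Λ1112 * ((WithLp.toLp 2 (A.mulVec v) : EuclideanSpace ℝ (Fin 2)) 0)^3 * ((WithLp.toLp 2 (A.mulVec v) : EuclideanSpace ℝ (Fin 2)) 1)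
          + 6*Λ1122 * ((WithLp.toLp 2 (A.mulVec v) : EuclideanSpace ℝ (Fin 2)) 0)^2 * ((WithLp.toLp 2 (A.mulVec v) : EuclideanSpace ℝ (Fin 2)) 1)^2
          + 4*Λ2212 * ((WithLp.toLp 2 (A.mulVec v) : EuclideanSpace ℝ (Fin 2)) 0) * ((WithLp.toLp 2 (A.mulVec v) : EuclideanSpace ℝ (Fin 2)) 1)^3
          + Λ2222 * ((WithLp.toLp 2 (A.mulVec v) : EuclideanSpace ℝ (Fin 2)) 1)^4)
        = (Λ1111 * (v 0)^4 + 4*Λ1112 * (v 0)^3 * (v 1) + 6*Λ1122 * (v 0)^2 * (v 1)^2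
          + 4*Λ2212 * (v 0) * (v 1)^3 + Λ2222 * (v 1)^4)) →
      ∀ ξ : EuclideanSpace ℝ (Fin 2), lam (WithLp.toLp 2 (A.mulVec ξ)) = lam ξ := by
    intro A hN hP ξ
    by_cases hξ : ξ = 0
    · subst hξ
      congr 1
      simp
    · set w : EuclideanSpace ℝ (Fin 2) := WithLp.toLp 2 (A.mulVec ξ) with hw
      have hn2 : ‖w‖^2 = ‖ξ‖^2 := by
        rw [nsq_two w, nsq_two ξ]; exact hN ξ
      have hn : ‖w‖ = ‖ξ‖ := by
        have := congrArg Real.sqrt hn2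
        rwa [Real.sqrt_sq (norm_nonneg _), Real.sqrt_sq (norm_nonneg _)] at this
      have hne : w ≠ 0 := by
        have h1 : ‖w‖ ≠ 0 := by rw [hn]; exact norm_ne_zero_iff.2 hξ
        exact norm_ne_zero_iff.1 h1
      have hPw := hP ξ
      rw [← hw] at hPw
      rw [show lam (WithLp.toLp 2 (A.mulVec ξ)) = lam w from rfl, hlam w hne, hlam ξ hξ, hn, hPw]
  refine ⟨?_, ?_, ?_, ?_⟩
  · -- (i)
    intro ξ
    by_cases hξ : ξ = 0
    · simp [hξ]
    · have hne : -ξ ≠ 0 := neg_ne_zero.2 hξ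
      rw [hlam _ hne, hlam _ hξ, norm_neg]
      have h0 : (-ξ : EuclideanSpace ℝ (Fin 2)) 0 = -(ξ 0) := rfl
      have h1 : (-ξ : EuclideanSpace ℝ (Fin 2)) 1 = -(ξ 1) := rfl
      rw [h0, h1]; ring
  · -- (ii)
    intro h1 h2
    have hA : Λ1112 = 0 := by rw [hΛ1112, h1, h2]; ring
    have hB : Λ2212 = 0 := by rw [hΛ2212, h1, h2]; ring
    refine main _ (fun v => ?_) (fun v => ?_)
    all_goals
      have e0 : ((Ref 0).mulVec v.ofLp) 0 = v 0 := by
        simp [Ref, Matrix.mulVec, dotProduct, Fin.sum_univ_two]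
      have e1 : ((Ref 0).mulVec v.ofLp) 1 = -(v 1) := by
        simp [Ref, Matrix.mulVec, dotProduct, Fin.sum_univ_two]
      simp only [WithLp.ofLp_toLp, e0, e1, hA, hB]
      ring
  · -- (iii)
    intro h1 h2 h3
    have hA : Λ1112 = 0 := by rw [hΛ1112, h1, h2]; ring
    have hB : Λ2212 = 0 := by rw [hΛ2212, h1, h2]; ring
    have hC : Λ2222 = Λ1111 := by rw [hΛ2222, hΛ1111]; linarith
    refine main _ (fun v => ?_) (fun v => ?_)
    all_goals
      have hpi : 2 * (π/4) = π/2 := by ring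
      have e0 : ((Ref (π/4)).mulVec v.ofLp) 0 = v 1 := by
        simp [Ref, hpi, Matrix.mulVec, dotProduct, Fin.sum_univ_two]
      have e1 : ((Ref (π/4)).mulVec v.ofLp) 1 = v 0 := by
        simp [Ref, hpi, Matrix.mulVec, dotProduct, Fin.sum_univ_two]
      simp only [WithLp.ofLp_toLp, e0, e1, hA, hB, hC]
      ring
  · -- (iv)
    intro h1 h2 h3 h4
    have hA : Λ1112 = 0 := by rw [hΛ1112, h1, h2]; ring
    have hB : Λ2212 = 0 := by rw [hΛ2212, h1, h2]; ring
    have hC : Λ2222 = Λ1111 := by rw [hΛ2222, hΛ1111]; linarith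
    have hD : 6*Λ1122 = 2*Λ1111 := by
      rw [hΛ1122, hΛ1111, h4]; linarith
    have hPgen : ∀ a b : ℝ,
        Λ1111*a^4 + 4*Λ1112*a^3*b + 6*Λ1122*a^2*b^2 + 4*Λ2212*a*b^3 + Λ2222*b^4
          = Λ1111 * (a^2 + b^2)^2 := by
      intro a b
      linear_combination (4*a^3*b)*hA + (4*a*b^3)*hB + b^4*hC + (a^2*b^2)*hD
    refine ⟨by rw [hΛ1111]; linarith, fun ξ hξ => ?_, fun Q hQ ξ => ?_⟩
    · rw [hlam _ hξ]
      have hnn : ‖ξ‖ ≠ 0 := norm_ne_zero_iff.2 hξ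
      have h6 : ‖ξ‖^6 = (‖ξ‖^2)^3 := by ring
      rw [hPgen, ← nsq_two, h6]
      field_simp
    · have horth := (Matrix.mem_orthogonalGroup_iff' (Fin 2) ℝ).mp hQ
      have h00 := congrFun (congrFun horth 0) 0
      have h11 := congrFun (congrFun horth 1) 1
      have h01 := congrFun (congrFun horth 0) 1
      simp [Matrix.mul_apply, Fin.sum_univ_two, Matrix.one_apply] at h00 h11 h01
      have hN : ∀ v : EuclideanSpace ℝ (Fin 2),
          ((WithLp.toLp 2 (Q.mulVec v) : EuclideanSpace ℝ (Fin 2)) 0)^2 +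
          ((WithLp.toLp 2 (Q.mulVec v) : EuclideanSpace ℝ (Fin 2)) 1)^2 = (v 0)^2 + (v 1)^2 := by
        intro v
        have e0 : ((WithLp.toLp 2 (Q.mulVec v) : EuclideanSpace ℝ (Fin 2)) 0) = Q 0 0 * v 0 + Q 0 1 * v 1 := by
          simp [Matrix.mulVec, dotProduct, Fin.sum_univ_two]
        have e1 : ((WithLp.toLp 2 (Q.mulVec v) : EuclideanSpace ℝ (Fin 2)) 1) = Q 1 0 * v 0 + Q 1 1 * v 1 := by
          simp [Matrix.mulVec, dotProduct, Fin.sum_univ_two]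
        rw [e0, e1]
        linear_combination (v 0)^2 * h00 + (v 1)^2 * h11 + (2 * v 0 * v 1) * h01
      refine main Q hN (fun v => ?_) ξ
      rw [hPgen, hPgen, hN v]
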